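/- If the one-variable equation (u0 X u1 ⋯ X un, v0 X v1 ⋯ X vn) has a nonempty solution, un = u·a^m for some word u, letter a, and m ≥ 0, and u0⋯u_{n−1}u is a prefix of v0⋯vn, then the empty word is also a solution of the equation. -/

import Mathlib

/-- `assemble x [u₀, u₁, …, uₙ]` is the word `u₀ x u₁ x ⋯ x uₙ`. -/
def assemble {Γ : Type*} (x : List Γ) (cs : List (List Γ)) : List Γ :=
  (cs.intersperse x).flatten

private lemma assemble_nil {Γ : Type*} : ∀ cs : List (List Γ),
    assemble ([] : List Γ) cs = cs.flatten
  | [] => rfl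
  | [c] => rfl
  | c :: d :: cs => by
    have ih := assemble_nil (d :: cs)
    simp only [assemble, List.intersperse_cons_cons, List.flatten_cons] at *
    simp [ih]

private lemma assemble_count {Γ : Type*} [DecidableEq Γ] (b : Γ) (x : List Γ) :
    ∀ cs : List (List Γ),
    (assemble x cs).count b = cs.flatten.count b + (cs.length - 1) * x.count b
  | [] => by simp [assemble]
  | [c] => by simp [assemble]
  | c :: d :: cs => by
    have ih := assemble_count b x (d :: cs)
    simp only [assemble, List.intersperse_cons_cons, List.flatten_cons,
      List.count_append, List.length_cons] at *
    simp only [ih, Nat.add_sub_cancel]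
    ring

private lemma assemble_length {Γ : Type*} (x : List Γ) :
    ∀ cs : List (List Γ),
    (assemble x cs).length = cs.flatten.length + (cs.length - 1) * x.length
  | [] => by simp [assemble]
  | [c] => by simp [assemble]
  | c :: d :: cs => by
    have ih := assemble_length x (d :: cs)
    simp only [assemble, List.intersperse_cons_cons, List.flatten_cons,
      List.length_append, List.length_cons] at *
    simp only [ih, Nat.add_sub_cancel]
    ring

/-- if `u₀ X u₁ ⋯ X uₙ = v₀ X v₁ ⋯ X vₙ` (n ≥ 1) has a nonempty
solution, uₙ = u·aᵐ for a word u, a letter a and m ≥ 0, and u₀⋯u_{n−1}u is a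
prefix of v₀⋯vₙ, then the empty word is also a solution. -/
theorem empty_solution {Γ : Type*}
    (us vs : List (List Γ)) (hlen : us.length = vs.length) (hn : 2 ≤ us.length)
    (x : List Γ) (hx : x ≠ []) (hsol : assemble x us = assemble x vs)
    (u : List Γ) (a : Γ) (m : ℕ)
    (hun : us.getLast? = some (u ++ List.replicate m a))
    (hpre : us.dropLast.flatten ++ u <+: vs.flatten) :
    assemble ([] : List Γ) us = assemble ([] : List Γ) vs := by
  classical
  rw [assemble_nil, assemble_nil]
  -- us.flatten = us.dropLast.flatten ++ u ++ replicate m a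
  have hus_ne : us ≠ [] := by rintro rfl; simp at hn
  have hsplit : us.dropLast ++ [us.getLast hus_ne] = us :=
    List.dropLast_append_getLast hus_ne
  have hlast : us.getLast hus_ne = u ++ List.replicate m a := by
    have := List.getLast?_eq_getLast (l := us) hus_ne
    rw [this] at hun
    exact Option.some.inj hun
  have husf : us.flatten = (us.dropLast.flatten ++ u) ++ List.replicate m a := by
    conv_lhs => rw [← hsplit]
    simp [hlast]
  -- counts equal
  have hcount : ∀ b : Γ, us.flatten.count b = vs.flatten.count b := by
    intro b
    have h1 := assemble_count b x us
    have h2 := assemble_count b x vs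
    rw [hsol, h2, hlen] at h1
    omega
  -- lengths equal
  have hlength : us.flatten.length = vs.flatten.length := by
    have h1 := assemble_length x us
    have h2 := assemble_length x vs
    rw [hsol, h2, hlen] at h1
    omega
  obtain ⟨w, hw⟩ := hpre
  have hwlen : w.length = m := by
    have := hlength
    rw [husf, ← hw] at this
    simp at this
    omega
  have hwcount : w.count a = m := by
    have := hcount a
    rw [husf, ← hw] at this
    simp at this
    omega
  have hwrep : w = List.replicate m a := by
    rw [List.eq_replicate_iff]
    refine ⟨hwlen, fun b hb => ?_⟩
    by_contra hba
    have : w.count a < w.length := by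
      have h1 : w.count a ≤ (w.erase b).length := by
        have he : (w.erase b).count a = w.count a :=
          List.count_erase_of_ne (l := w) (fun h => hba h.symm)
        calc w.count a = (w.erase b).count a := he.symm
          _ ≤ (w.erase b).length := List.count_le_length
      have h2 : (w.erase b).length < w.length := by
        rw [List.length_erase_of_mem hb]
        exact Nat.pred_lt (by simp [List.length_pos_iff.mpr]; rintro rfl; simp at hb)
      omega
    omega
  rw [husf, ← hw, hwrep]
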